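/- For all integers k ≥ 0 and n ≥ 1, one has s_{k,2}(n) = − Σ_{q=1}^{n} (2n − 2q + 2) · q^{2k+1} + Σ_{q=1}^{2n} (2n − q + 1) · q^{2k+1}. -/

import Mathlib

/-- `C n j q` is the coefficient `C_{j,q}(n)` of `a^{q+j}` in `(∑_{i=0}^{n-1} a^{i+1})^j`. -/
noncomputable def C (n j q : ℕ) : ℕ :=
  Polynomial.coeff ((∑ i ∈ Finset.range n, (Polynomial.X : Polynomial ℕ) ^ (i + 1)) ^ j) (q + j)

/-- `s k j n = s_{k,j}(n) = ∑_{q=0}^{j(n-1)} C_{j,q}(n) (j+q)^{2k+1}`. -/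
noncomputable def s (k j n : ℕ) : ℕ :=
  ∑ q ∈ Finset.range (j * (n - 1) + 1), C n j q * (j + q) ^ (2 * k + 1)

/-- Weighted-sum identity: `∑_{q<m} (m-q)·f q = ∑_{i<m} ∑_{q≤i} f q`. -/
lemma weight_sum (f : ℕ → ℤ) (m : ℕ) :
    ∑ q ∈ Finset.range m, ((m : ℤ) - q) * f q
      = ∑ i ∈ Finset.range m, ∑ q ∈ Finset.range (i + 1), f q := by
  induction m with
  | zero => simp
  | succ m ih =>
    rw [Finset.sum_range_succ (fun i => ∑ q ∈ Finset.range (i+1), f q), ← ih,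
        Finset.sum_range_succ (fun q => ((↑(m+1) : ℤ) - q) * f q),
        Finset.sum_range_succ f]
    push_cast
    have h : ∀ x : ℕ, ((m:ℤ) + 1 - x) * f x = ((m:ℤ) - x) * f x + f x := fun x => by ring
    simp only [h, Finset.sum_add_distrib]
    ring

/-- Step 1: `s_{k,2}(n)` as a double sum. -/
lemma s_two_eq (k n : ℕ) (hn : 1 ≤ n) :
    s k 2 n = ∑ i ∈ Finset.range n, ∑ j ∈ Finset.range n, (i + j + 2) ^ (2 * k + 1) := by
  unfold s C
  have hP : (∑ i ∈ Finset.range n, (Polynomial.X : Polynomial ℕ) ^ (i + 1)) ^ 2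
      = ∑ i ∈ Finset.range n, ∑ j ∈ Finset.range n,
          (Polynomial.X : Polynomial ℕ) ^ (i + j + 2) := by
    rw [sq, Finset.sum_mul_sum]
    refine Finset.sum_congr rfl fun i _ => Finset.sum_congr rfl fun j _ => ?_
    rw [← pow_add]
    ring_nf
  rw [hP]
  simp only [Polynomial.finset_sum_coeff, Polynomial.coeff_X_pow]
  simp only [Finset.sum_mul]
  rw [Finset.sum_comm]
  refine Finset.sum_congr rfl fun i hi => ?_
  rw [Finset.sum_comm]
  refine Finset.sum_congr rfl fun j hj => ?_
  rw [Finset.sum_eq_single (i + j)]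
  · simp [Nat.add_comm]
  · intro q hq hne
    have : ¬ (q + 2 = i + j + 2) := by omega
    simp [this, hne]
  · intro h
    exfalso
    apply h
    simp only [Finset.mem_range] at hi hj ⊢
    omega

theorem s_k2_formula (k n : ℕ) (hn : 1 ≤ n) :
    (s k 2 n : ℤ) =
      -∑ q ∈ Finset.Icc 1 n, (2 * (n : ℤ) - 2 * (q : ℤ) + 2) * (q : ℤ) ^ (2 * k + 1)
      + ∑ q ∈ Finset.Icc 1 (2 * n), (2 * (n : ℤ) - (q : ℤ) + 1) * (q : ℤ) ^ (2 * k + 1) := by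
  set p := 2 * k + 1 with hp
  set f : ℕ → ℤ := fun q => ((q : ℤ) + 1) ^ p with hf
  set S : ℕ → ℤ := fun m => ∑ q ∈ Finset.range m, f q with hS
  -- LHS
  have hL : (s k 2 n : ℤ) = ∑ i ∈ Finset.range n, (S (i + 1 + n) - S (i + 1)) := by
    rw [s_two_eq k n hn]
    push_cast
    refine Finset.sum_congr rfl fun i _ => ?_
    have hsplit : S (i + 1 + n) = S (i + 1) + ∑ j ∈ Finset.range n, f (i + 1 + j) := by
      simpa [hS] using Finset.sum_range_add f (i + 1) n
    rw [hsplit, add_sub_cancel_left]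
    refine Finset.sum_congr rfl fun j _ => ?_
    simp only [hf]
    push_cast
    rw [hp]
    ring
  -- RHS rewrites
  have hIcc : ∀ (m : ℕ) (g : ℕ → ℤ), ∑ q ∈ Finset.Icc 1 m, g q
      = ∑ q ∈ Finset.range m, g (1 + q) := by
    intro m g
    rw [← Finset.Ico_add_one_right_eq_Icc, Finset.sum_Ico_eq_sum_range]
    simp
  have h1 : ∑ q ∈ Finset.Icc 1 n, (2 * (n : ℤ) - 2 * (q : ℤ) + 2) * (q : ℤ) ^ p
      = 2 * ∑ i ∈ Finset.range n, S (i + 1) := by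
    rw [hIcc n]
    calc ∑ q ∈ Finset.range n, (2 * (n : ℤ) - 2 * ((1 + q : ℕ) : ℤ) + 2) * ((1 + q : ℕ) : ℤ) ^ p
        = 2 * ∑ q ∈ Finset.range n, ((n : ℤ) - q) * f q := by
          rw [Finset.mul_sum]
          refine Finset.sum_congr rfl fun q _ => ?_
          simp only [hf]
          push_cast
          ring
      _ = 2 * ∑ i ∈ Finset.range n, S (i + 1) := by
          rw [weight_sum f n]
  have h2 : ∑ q ∈ Finset.Icc 1 (2 * n), (2 * (n : ℤ) - (q : ℤ) + 1) * (q : ℤ) ^ p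
      = ∑ i ∈ Finset.range n, S (i + 1) + ∑ i ∈ Finset.range n, S (n + i + 1) := by
    have e1 : ∑ q ∈ Finset.Icc 1 (2 * n), (2 * (n : ℤ) - (q : ℤ) + 1) * (q : ℤ) ^ p
        = ∑ i ∈ Finset.range (2 * n), S (i + 1) := by
      rw [hIcc (2 * n)]
      calc ∑ q ∈ Finset.range (2 * n), (2 * (n : ℤ) - ((1 + q : ℕ) : ℤ) + 1) * ((1 + q : ℕ) : ℤ) ^ p
          = ∑ q ∈ Finset.range (2 * n), (((2 * n : ℕ) : ℤ) - q) * f q := by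
            refine Finset.sum_congr rfl fun q _ => ?_
            simp only [hf]
            push_cast
            ring
        _ = ∑ i ∈ Finset.range (2 * n), S (i + 1) := by
            rw [weight_sum f (2 * n)]
    rw [e1, two_mul, Finset.sum_range_add (fun i => S (i + 1)) n n]
  rw [hL, h1, h2]
  rw [Finset.sum_sub_distrib]
  have : ∀ i : ℕ, S (i + 1 + n) = S (n + i + 1) := fun i => by
    congr 1
    omega
  simp only [this]
  ring
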